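/- Fix a positive integer n and let h : ℕ⁺ → ℤ. The following are equivalent: (i) for every divisor t of n, Σ_{d∣t} h(d) ≡ 0 mod t; (ii) for every divisor t of n there exists a positive integer m such that Σ_{d∣t} h(d)·C((t/d)·m − 1, (t/d) − 1) ≡ 0 mod t. -/

import Mathlib

open Finset
open scoped Classical

lemma multiset_card_sum {β α : Type*} (s : Finset β) (f : β → Multiset α) :
    Multiset.card (∑ i ∈ s, f i) = ∑ i ∈ s, Multiset.card (f i) := by
  induction s using Finset.cons_induction with
  | empty => simp
  | cons a s ha ih => simp [Finset.sum_cons, ih]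

lemma card_fixed_sum (α : Type*) [Fintype α] [DecidableEq α] (M c : ℕ) (hc : c ≤ M) :
    (Finset.univ.filter (fun g : α → Fin (M+1) => ∑ i, (g i : ℕ) = c)).card
      = Nat.multichoose (Fintype.card α) c := by
  classical
  rw [← Sym.card_sym_eq_multichoose, ← Fintype.card_coe]
  apply Fintype.card_congr
  refine ⟨fun g => ⟨∑ i, (g.1 i : ℕ) • ({i} : Multiset α), ?_⟩,
    fun s => ⟨fun i => ⟨s.1.count i, ?_⟩, ?_⟩, ?_, ?_⟩
  · have hg := g.2
    simp only [Finset.mem_filter] at hg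
    rw [multiset_card_sum]
    simpa using hg.2
  · have h1 : s.1.count i ≤ c := by
      simpa [s.2] using Multiset.count_le_card i s.1
    omega
  · simp only [Finset.mem_filter, Finset.mem_univ, true_and]
    have key : ∑ x ∈ s.1.toFinset, s.1.count x = Multiset.card s.1 :=
      Multiset.toFinset_sum_count_eq s.1
    rw [show (∑ i : α, s.1.count i) = ∑ x ∈ s.1.toFinset, s.1.count x from
      (Finset.sum_subset (Finset.subset_univ s.1.toFinset)
        (fun x _ hx => by simpa [Multiset.count_eq_zero] using hx)).symm, key, s.2]
  · intro g
    ext i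
    simp [Multiset.count_sum', Multiset.count_singleton]
  · intro s
    ext j
    simp [Multiset.count_sum', Multiset.count_singleton]

lemma zmod_sum_decompose {M : Type*} [AddCommMonoid M] (r u : ℕ) (hr : 0 < r) (hu : 0 < u) [NeZero (r*u)]
    (F : ZMod (r*u) → M) :
    ∑ x : ZMod (r*u), F x
      = ∑ a : Fin r, ∑ b : Fin u, F (((a : ℕ) + r * (b : ℕ) : ℕ) : ZMod (r*u)) := by
  have hlt : ∀ (a : Fin r) (b : Fin u), (a : ℕ) + r * (b : ℕ) < r * u := by
    intro a b
    have h1 : (a : ℕ) < r := a.isLt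
    have h2 : (b : ℕ) + 1 ≤ u := b.isLt
    calc (a : ℕ) + r * (b : ℕ) < r + r * (b : ℕ) := by omega
    _ = r * ((b : ℕ) + 1) := by ring
    _ ≤ r * u := Nat.mul_le_mul_left r h2
  have hbij : Function.Bijective
      (fun p : Fin r × Fin u => (((p.1 : ℕ) + r * (p.2 : ℕ) : ℕ) : ZMod (r*u))) := by
    rw [Fintype.bijective_iff_injective_and_card]
    refine ⟨?_, by simp [ZMod.card]⟩
    rintro ⟨a, b⟩ ⟨a', b'⟩ hab
    simp only at hab
    apply_fun ZMod.val at hab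
    rw [ZMod.val_cast_of_lt (hlt a b), ZMod.val_cast_of_lt (hlt a' b')] at hab
    have ha : (a : ℕ) = (a' : ℕ) := by
      have := congrArg (· % r) hab
      simpa [Nat.add_mul_mod_self_left, Nat.mod_eq_of_lt a.isLt, Nat.mod_eq_of_lt a'.isLt]
        using this
    have hb : (b : ℕ) = (b' : ℕ) := by
      rw [ha] at hab
      have := Nat.add_left_cancel hab
      exact Nat.eq_of_mul_eq_mul_left hr this
    simp [Prod.ext_iff, Fin.ext_iff, ha, hb]
  rw [← Fintype.sum_bijective _ hbij _ F (fun _ => rfl), Fintype.sum_prod_type]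

open scoped Classical

noncomputable section Neck

variable {q : ℕ} {β : Type*}

/-- `r` is a period of `g : ZMod q → β`. -/
def isPer (r : ℕ) (g : ZMod q → β) : Prop := ∀ i, g (i + (r : ZMod q)) = g i

/-- shift of `g` by `k`. -/
def shf (k : ZMod q) (g : ZMod q → β) : ZMod q → β := fun i => g (i + k)

/-- the minimal positive period. -/
def per (g : ZMod q → β) : ℕ :=
  if h : ∃ r, 0 < r ∧ isPer r g then Nat.find h else 0

lemma isPer_q (hq : 0 < q) (g : ZMod q → β) : isPer q g := by
  intro i; simp [ZMod.natCast_self]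

lemma per_exists (hq : 0 < q) (g : ZMod q → β) : ∃ r, 0 < r ∧ isPer r g :=
  ⟨q, hq, isPer_q hq g⟩

lemma per_pos (hq : 0 < q) (g : ZMod q → β) : 0 < per g ∧ isPer (per g) g := by
  rw [per, dif_pos (per_exists hq g)]
  exact Nat.find_spec (per_exists hq g)

lemma per_min (hq : 0 < q) (g : ZMod q → β) {r : ℕ} (hr : 0 < r) (h : isPer r g) :
    per g ≤ r := by
  rw [per, dif_pos (per_exists hq g)]
  exact Nat.find_le ⟨hr, h⟩

/-- the set of shift-invariant translations is an additive subgroup. -/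
def Hsub (g : ZMod q → β) : AddSubgroup (ZMod q) where
  carrier := {x | ∀ i, g (i + x) = g i}
  zero_mem' := by intro i; simp
  add_mem' := by
    intro x y hx hy i
    rw [← add_assoc, hy, hx]
  neg_mem' := by
    intro x hx i
    have := hx (i + -x)
    rw [add_assoc, neg_add_cancel, add_zero] at this
    exact this.symm

lemma isPer_iff_mem (r : ℕ) (g : ZMod q → β) :
    isPer r g ↔ ((r : ZMod q) ∈ Hsub g) := Iff.rfl

lemma isPer_gcd {r s : ℕ} {g : ZMod q → β} (hr : isPer r g) (hs : isPer s g) :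
    isPer (Nat.gcd r s) g := by
  rw [isPer_iff_mem] at *
  have hbez : (Nat.gcd r s : ℤ) = r * Nat.gcdA r s + s * Nat.gcdB r s := Nat.gcd_eq_gcd_ab r s
  have : ((Nat.gcd r s : ℕ) : ZMod q)
      = (Nat.gcdA r s) • ((r : ℕ) : ZMod q) + (Nat.gcdB r s) • ((s : ℕ) : ZMod q) := by
    have := congrArg (fun z : ℤ => (z : ZMod q)) hbez
    push_cast at this
    rw [this]
    simp [zsmul_eq_mul]
    ring
  rw [this]
  exact (Hsub g).add_mem ((Hsub g).zsmul_mem hr _) ((Hsub g).zsmul_mem hs _)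

lemma per_dvd_of_isPer (hq : 0 < q) {r : ℕ} {g : ZMod q → β} (hr : 0 < r) (h : isPer r g) :
    per g ∣ r := by
  obtain ⟨hpos, hper⟩ := per_pos hq g
  have hgcd : isPer (Nat.gcd (per g) r) g := isPer_gcd hper h
  have hgpos : 0 < Nat.gcd (per g) r := Nat.gcd_pos_of_pos_right _ hr
  have h1 : per g ≤ Nat.gcd (per g) r := per_min hq g hgpos hgcd
  have h2 : Nat.gcd (per g) r ≤ per g := Nat.le_of_dvd hpos (Nat.gcd_dvd_left _ _)
  have : Nat.gcd (per g) r = per g := le_antisymm h2 h1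
  rw [← this]
  exact Nat.gcd_dvd_right _ _

lemma per_dvd_q (hq : 0 < q) (g : ZMod q → β) : per g ∣ q :=
  per_dvd_of_isPer hq hq (isPer_q hq g)

lemma isPer_of_per_dvd (hq : 0 < q) {r : ℕ} {g : ZMod q → β} (h : per g ∣ r) :
    isPer r g := by
  obtain ⟨k, rfl⟩ := h
  rw [isPer_iff_mem]
  have hper := (per_pos hq g).2
  rw [isPer_iff_mem] at hper
  have : ((per g * k : ℕ) : ZMod q) = k • ((per g : ℕ) : ZMod q) := by
    push_cast
    rw [nsmul_eq_mul]
    ring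
  rw [this]
  exact (Hsub g).nsmul_mem hper k

lemma isPer_shift {r : ℕ} {g : ZMod q → β} (k : ZMod q) (h : isPer r g) :
    isPer r (shf k g) := by
  intro i
  show g (i + (r : ZMod q) + k) = g (i + k)
  rw [add_right_comm]
  exact h (i + k)

lemma shf_shf (k l : ZMod q) (g : ZMod q → β) : shf k (shf l g) = shf (k + l) g := by
  funext i
  show g (i + k + l) = g (i + (k + l))
  rw [add_assoc]

lemma shf_zero (g : ZMod q → β) : shf 0 g = g := by funext i; simp [shf]

lemma per_shf (hq : 0 < q) (k : ZMod q) (g : ZMod q → β) : per (shf k g) = per g := by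
  have h1 : ∀ (k' : ZMod q) (g' : ZMod q → β), per g' ∣ per (shf k' g') := by
    intro k' g'
    exact per_dvd_of_isPer hq (per_pos hq (shf k' g')).1
      (by
        have : isPer (per (shf k' g')) (shf (-k') (shf k' g')) :=
          isPer_shift _ (per_pos hq (shf k' g')).2
        rwa [shf_shf, neg_add_cancel, shf_zero] at this)
  exact Nat.dvd_antisymm
    (per_dvd_of_isPer hq (per_pos hq g).1 (isPer_shift k (per_pos hq g).2))
    (h1 k g)

end Neck

noncomputable section Neck2

lemma zmod_sum_decompose' {M : Type*} [AddCommMonoid M] (r q : ℕ) (hr : 0 < r) (hq : 0 < q) [NeZero q]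
    (hdvd : r ∣ q) (F : ZMod q → M) :
    ∑ x : ZMod q, F x
      = ∑ a : Fin r, ∑ b : Fin (q/r), F (((a : ℕ) + r * (b : ℕ) : ℕ) : ZMod q) := by
  obtain ⟨u, rfl⟩ := hdvd
  have hu : 0 < u := by
    rcases Nat.eq_zero_or_pos u with h | h
    · subst h; simp at hq
    · exact h
  rw [Nat.mul_div_cancel_left u hr]
  exact zmod_sum_decompose r u hr hu F

lemma fin_sum_zmod {M : Type*} [AddCommMonoid M] (r : ℕ) (hr : 0 < r) [NeZero r] (f : ZMod r → M) :
    ∑ a : Fin r, f ((a : ℕ) : ZMod r) = ∑ j : ZMod r, f j := by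
  apply Fintype.sum_bijective (fun a : Fin r => ((a : ℕ) : ZMod r)) ?_ _ _ (fun _ => rfl)
  rw [Fintype.bijective_iff_injective_and_card]
  refine ⟨fun a a' haa => ?_, by simp [ZMod.card]⟩
  apply_fun ZMod.val at haa
  rwa [ZMod.val_cast_of_lt a.isLt, ZMod.val_cast_of_lt a'.isLt, ← Fin.ext_iff] at haa

lemma isPer_nat {q : ℕ} {β : Type*} {r : ℕ} {g : ZMod q → β} (h : isPer r g) (a k : ℕ) :
    g ((a + r * k : ℕ) : ZMod q) = g ((a : ℕ) : ZMod q) := by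
  induction k with
  | zero => simp
  | succ k ih =>
    have h1 : (a + r * (k+1) : ℕ) = ((a + r * k) + r : ℕ) := by ring
    rw [h1, Nat.cast_add]
    rw [h (((a + r * k : ℕ) : ZMod q))]
    exact ih

/-- the finset of "compositions": functions with entries summing to `q*(m-1)`. -/
def XX (q m : ℕ) [NeZero q] : Finset (ZMod q → Fin (q*(m-1)+1)) :=
  univ.filter (fun g => ∑ i, (g i : ℕ) = q*(m-1))

/-- those with period `r`. -/
def PerF (q m r : ℕ) [NeZero q] : Finset (ZMod q → Fin (q*(m-1)+1)) :=
  (XX q m).filter (fun g => isPer r g)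

lemma choose_arith (r m : ℕ) (hr : 0 < r) (hm : 0 < m) :
    (r + r*(m-1) - 1).choose (r*(m-1)) = (r*m - 1).choose (r-1) := by
  obtain ⟨m', rfl⟩ : ∃ m', m = m' + 1 := ⟨m - 1, by omega⟩
  simp only [Nat.add_sub_cancel]
  have h1 : r + r * m' - 1 = r * (m' + 1) - 1 := by
    rw [Nat.mul_succ]; omega
  rw [h1]
  have h2 : r * m' = (r * (m' + 1) - 1) - (r - 1) := by
    rw [Nat.mul_succ]; omega
  rw [h2]
  apply Nat.choose_symm
  rw [Nat.mul_succ]; omega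

lemma card_PerF (q m : ℕ) [NeZero q] (hq : 0 < q) (hm : 0 < m) (r : ℕ) (hdvd : r ∣ q) :
    (PerF q m r).card = (r * m - 1).choose (r - 1) := by
  have hr : 0 < r := Nat.pos_of_dvd_of_pos hdvd hq
  haveI : NeZero r := ⟨hr.ne'⟩
  set u := q / r with hu'
  have huq : r * u = q := Nat.mul_div_cancel' hdvd
  have hu : 0 < u := by
    rcases Nat.eq_zero_or_pos u with h | h
    · rw [h, Nat.mul_zero] at huq; omega
    · exact h
  -- the target finset
  have key : (PerF q m r).card
      = (univ.filter (fun h : ZMod r → Fin (q*(m-1)+1) => ∑ j, (h j : ℕ) = r*(m-1))).card := by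
    apply Finset.card_bij' (i := fun g _ => fun j : ZMod r => g (((j.val : ℕ) : ZMod q)))
      (j := fun h _ => fun i : ZMod q => h (ZMod.castHom hdvd (ZMod r) i))
    · -- to ∈ target
      intro g hg
      simp only [PerF, XX, Finset.mem_filter, Finset.mem_univ, true_and] at hg ⊢
      obtain ⟨hsum, hper⟩ := hg
      have hdec := zmod_sum_decompose' r q hr hq hdvd (fun x => (g x : ℕ))
      have hstep : ∀ a : Fin r, ∀ b : Fin u,
          (g (((a : ℕ) + r * (b : ℕ) : ℕ) : ZMod q) : ℕ) = (g (((a:ℕ) : ZMod q)) : ℕ) := by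
        intro a b; rw [isPer_nat hper]
      rw [hsum] at hdec
      have hdec2 : q * (m-1) = ∑ a : Fin r, u * (g (((a:ℕ) : ZMod q)) : ℕ) := by
        refine hdec.trans ?_
        apply Finset.sum_congr rfl
        intro a _
        rw [Finset.sum_congr rfl (fun b _ => hstep a b), Finset.sum_const]
        simp [mul_comm]
      rw [← Finset.mul_sum] at hdec2
      have hfin : ∑ a : Fin r, (g (((a:ℕ) : ZMod q)) : ℕ)
          = ∑ j : ZMod r, (g (((j.val : ℕ) : ZMod q)) : ℕ) := by
        rw [← fin_sum_zmod r hr (fun j : ZMod r => (g (((j.val : ℕ) : ZMod q)) : ℕ))]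
        apply Finset.sum_congr rfl
        intro a _
        congr 2
        simp [ZMod.val_natCast, Nat.mod_eq_of_lt a.isLt]
      rw [hfin] at hdec2
      have : u * (r * (m-1)) = u * (∑ j : ZMod r, (g (((j.val : ℕ) : ZMod q)) : ℕ)) := by
        rw [← hdec2, ← huq]; ring
      exact (Nat.eq_of_mul_eq_mul_left hu this).symm
    · -- fro ∈ PerF
      intro h hh
      simp only [Finset.mem_filter, Finset.mem_univ, true_and] at hh
      simp only [PerF, XX, Finset.mem_filter, Finset.mem_univ, true_and]
      constructor
      · have hdec := zmod_sum_decompose' r q hr hq hdvd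
          (fun x => (h (ZMod.castHom hdvd (ZMod r) x) : ℕ))
        rw [hdec]
        have hstep : ∀ a : Fin r, ∀ b : Fin u,
            (h (ZMod.castHom hdvd (ZMod r) (((a : ℕ) + r * (b : ℕ) : ℕ) : ZMod q)) : ℕ)
              = (h (((a:ℕ) : ZMod r)) : ℕ) := by
          intro a b
          congr 2
          rw [map_natCast (ZMod.castHom hdvd (ZMod r))]
          push_cast
          simp [ZMod.natCast_self]
        calc ∑ a : Fin r, ∑ b : Fin u,
              (h (ZMod.castHom hdvd (ZMod r) (((a : ℕ) + r * (b : ℕ) : ℕ) : ZMod q)) : ℕ)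
            = ∑ a : Fin r, u * (h (((a:ℕ) : ZMod r)) : ℕ) := by
              apply Finset.sum_congr rfl
              intro a _
              rw [Finset.sum_congr rfl (fun b _ => hstep a b), Finset.sum_const]
              simp [mul_comm]
          _ = u * ∑ a : Fin r, (h (((a:ℕ) : ZMod r)) : ℕ) := by rw [← Finset.mul_sum]
          _ = u * ∑ j : ZMod r, (h j : ℕ) := by rw [fin_sum_zmod r hr (fun j => (h j : ℕ))]
          _ = u * (r * (m-1)) := by rw [hh]
          _ = q * (m-1) := by rw [← huq]; ring
      · intro i
        show h (ZMod.castHom hdvd (ZMod r) (i + (r : ZMod q))) = _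
        rw [map_add, map_natCast (ZMod.castHom hdvd (ZMod r))]
        simp [ZMod.natCast_self]
    · -- left inverse
      intro g hg
      simp only [PerF, XX, Finset.mem_filter] at hg
      funext i
      show g ((((ZMod.castHom hdvd (ZMod r)) i).val : ℕ) : ZMod q) = g i
      have h1 : ((ZMod.castHom hdvd (ZMod r)) i).val = i.val % r := by
        rw [ZMod.castHom_apply, ← ZMod.natCast_val, ZMod.val_natCast]
      rw [h1]
      have h2 := isPer_nat hg.2 (i.val % r) (i.val / r)
      rw [Nat.mod_add_div] at h2
      rw [← h2]
      congr 1
      exact ZMod.natCast_rightInverse i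
    · -- right inverse
      intro h hh
      funext j
      show h (ZMod.castHom hdvd (ZMod r) ((j.val : ℕ) : ZMod q)) = h j
      rw [map_natCast (ZMod.castHom hdvd (ZMod r)) j.val]
      congr 1
      exact ZMod.natCast_rightInverse j
  rw [key]
  have hble : r * (m-1) ≤ q * (m-1) :=
    Nat.mul_le_mul_right _ (Nat.le_of_dvd hq hdvd)
  rw [card_fixed_sum (ZMod r) (q*(m-1)) (r*(m-1)) hble, ZMod.card, Nat.multichoose_eq]
  exact choose_arith r m hr hm

end Neck2
noncomputable section Neck3

/-- number of elements of `XX q m` with exact period `s`. -/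
def Ee (q m s : ℕ) [NeZero q] : ℕ := ((XX q m).filter (fun g => per g = s)).card

lemma cardPerF_eq_sum (q m : ℕ) [NeZero q] (hq : 0 < q) (r : ℕ) (hdvd : r ∣ q) :
    (PerF q m r).card = ∑ s ∈ r.divisors, Ee q m s := by
  have hr : 0 < r := Nat.pos_of_dvd_of_pos hdvd hq
  rw [Finset.card_eq_sum_card_fiberwise
    (f := fun g => per g) (t := r.divisors)
    (fun g hg => by
      simp only [PerF, Finset.mem_coe, Finset.mem_filter] at hg
      exact Nat.mem_divisors.mpr ⟨per_dvd_of_isPer hq hr hg.2, hr.ne'⟩)]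
  apply Finset.sum_congr rfl
  intro s hs
  congr 1
  ext g
  simp only [PerF, XX, Finset.mem_filter, Finset.mem_univ, true_and]
  constructor
  · rintro ⟨⟨h1, _⟩, h3⟩; exact ⟨h1, h3⟩
  · rintro ⟨h1, h3⟩
    refine ⟨⟨h1, isPer_of_per_dvd hq ?_⟩, h3⟩
    rw [h3]
    exact Nat.dvd_of_mem_divisors hs

lemma q_dvd_Ee (q m : ℕ) [NeZero q] (hq : 0 < q) : q ∣ Ee q m q := by
  classical
  set A := (XX q m).filter (fun g => per g = q) with hA
  have hshift_mem : ∀ (k : ZMod q) (g : ZMod q → Fin (q*(m-1)+1)), g ∈ A → shf k g ∈ A := by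
    intro k g hg
    simp only [hA, XX, Finset.mem_filter, Finset.mem_univ, true_and] at hg ⊢
    refine ⟨?_, by rw [per_shf hq]; exact hg.2⟩
    have hsum : ∑ i : ZMod q, ((shf k g) i).val = ∑ i : ZMod q, (g i).val :=
      Fintype.sum_equiv (Equiv.addRight k) _ _ (fun i => rfl)
    exact hsum.trans hg.1
  set φ : (ZMod q → Fin (q*(m-1)+1)) → Finset (ZMod q → Fin (q*(m-1)+1)) :=
    fun g => Finset.univ.image (fun k : ZMod q => shf k g) with hφ
  have hφ_orbit : ∀ (k : ZMod q) g, φ (shf k g) = φ g := by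
    intro k g
    ext y
    simp only [hφ, Finset.mem_image, Finset.mem_univ, true_and]
    constructor
    · rintro ⟨l, rfl⟩; exact ⟨l + k, by rw [shf_shf]⟩
    · rintro ⟨l, rfl⟩
      exact ⟨l - k, by rw [shf_shf, sub_add_cancel]⟩
  have hcard : Finset.card A = ∑ b ∈ A.image φ, q := by
    rw [Finset.card_eq_sum_card_fiberwise (f := φ) (t := A.image φ)
      (fun g hg => Finset.mem_image_of_mem φ hg)]
    apply Finset.sum_congr rfl
    intro b hb
    obtain ⟨g₀, hg₀, rfl⟩ := Finset.mem_image.mp hb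
    have hper : per g₀ = q := by
      simp only [hA, Finset.mem_filter] at hg₀; exact hg₀.2
    have hinj : Function.Injective (fun k : ZMod q => shf k g₀) := by
      intro k l hkl
      simp only at hkl
      have hfix : ∀ j, g₀ (j + (k - l)) = g₀ j := by
        intro j
        have h1 := congrFun hkl (j - l)
        have h2 : j - l + l = j := sub_add_cancel j l
        show g₀ (j + (k - l)) = g₀ j
        calc g₀ (j + (k - l)) = g₀ (j - l + k) := by ring_nf
          _ = g₀ (j - l + l) := h1
          _ = g₀ j := by rw [h2]
      by_contra hne
      have hd : k - l ≠ 0 := fun h => hne (sub_eq_zero.mp h)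
      have hv : (k - l).val ≠ 0 := by
        intro h
        apply hd
        have := ZMod.natCast_rightInverse (k - l)
        rw [h] at this
        simpa using this.symm
      have hip : isPer (k - l).val g₀ := by
        intro i
        rw [ZMod.natCast_rightInverse (k - l)]
        exact hfix i
      have := per_dvd_of_isPer hq (Nat.pos_of_ne_zero hv) hip
      rw [hper] at this
      have hlt : (k - l).val < q := ZMod.val_lt (k - l)
      have hge := Nat.le_of_dvd (Nat.pos_of_ne_zero hv) this
      omega
    have hfilter : A.filter (fun g => φ g = φ g₀) = φ g₀ := by
      ext x
      simp only [Finset.mem_filter]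
      constructor
      · rintro ⟨hxA, hxφ⟩
        rw [← hxφ]
        simp only [hφ, Finset.mem_image, Finset.mem_univ, true_and]
        exact ⟨0, shf_zero x⟩
      · intro hx
        simp only [hφ, Finset.mem_image, Finset.mem_univ, true_and] at hx
        obtain ⟨k, rfl⟩ := hx
        exact ⟨hshift_mem k g₀ hg₀, hφ_orbit k g₀⟩
    rw [hfilter, hφ]
    rw [Finset.card_image_of_injective _ hinj]
    simp [ZMod.card]
  rw [Ee, ← hA, hcard, Finset.sum_const, smul_eq_mul]
  exact Dvd.intro_left _ rfl

end Neck3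

section NeckKey

open ArithmeticFunction

lemma neck_key (q m : ℕ) (hq : 0 < q) (hm : 0 < m) :
    (q : ℤ) ∣ ∑ x ∈ q.divisorsAntidiagonal,
      (moebius x.1 : ℤ) * (((x.2 * m - 1).choose (x.2 - 1) : ℕ) : ℤ) := by
  haveI : NeZero q := ⟨hq.ne'⟩
  have hprem : ∀ n > 0, n ∈ {d : ℕ | d ∣ q} →
      ∑ i ∈ n.divisors, ((Ee q m i : ℤ)) = (((n * m - 1).choose (n - 1) : ℕ) : ℤ) := by
    intro n hn hnq
    have h1 := cardPerF_eq_sum q m hq n hnq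
    have h2 := card_PerF q m hq hm n hnq
    rw [h1] at h2
    push_cast [← h2]
    rfl
  have hinv := (ArithmeticFunction.sum_eq_iff_sum_mul_moebius_eq_on
      {d : ℕ | d ∣ q} (fun a b hab hb => hab.trans hb)).mp hprem q hq (dvd_refl q)
  simp only [Int.cast_id] at hinv
  rw [hinv]
  exact Int.natCast_dvd_natCast.mpr (q_dvd_Ee q m hq)

end NeckKey

section Assemble

open ArithmeticFunction
open scoped ArithmeticFunction.zeta ArithmeticFunction.Moebius

/-- `h` extended to an arithmetic function. -/
def hAF (h : ℕ → ℤ) : ArithmeticFunction ℤ := ⟨fun d => if d = 0 then 0 else h d, by simp⟩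

/-- the binomial arithmetic function. -/
def BAF (m : ℕ) : ArithmeticFunction ℤ :=
  ⟨fun r => if r = 0 then 0 else (((r * m - 1).choose (r - 1) : ℕ) : ℤ), by simp⟩

lemma hAF_mul_zeta (h : ℕ → ℤ) (t : ℕ) (ht : 0 < t) :
    (hAF h * (ζ : ArithmeticFunction ℤ)) t = ∑ d ∈ t.divisors, h d := by
  rw [ArithmeticFunction.coe_mul_zeta_apply]
  apply Finset.sum_congr rfl
  intro d hd
  have : d ≠ 0 := (Nat.pos_of_mem_divisors hd).ne'
  simp [hAF, this]

lemma moebius_mul_BAF_dvd (m v : ℕ) (hm : 0 < m) (hv : 0 < v) :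
    (v : ℤ) ∣ ((μ : ArithmeticFunction ℤ) * BAF m) v := by
  rw [ArithmeticFunction.mul_apply]
  have hcongr : ∑ x ∈ v.divisorsAntidiagonal, (μ : ArithmeticFunction ℤ) x.1 * BAF m x.2
      = ∑ x ∈ v.divisorsAntidiagonal,
          (moebius x.1 : ℤ) * (((x.2 * m - 1).choose (x.2 - 1) : ℕ) : ℤ) := by
    apply Finset.sum_congr rfl
    intro x hx
    have h2 : x.2 ≠ 0 := by
      obtain ⟨hxv, hv0⟩ := Nat.mem_divisorsAntidiagonal.mp hx
      intro hc; rw [hc, mul_zero] at hxv; exact hv0 hxv.symm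
    simp [BAF, h2]
  rw [hcongr]
  exact neck_key v m hv hm

lemma main_step (h : ℕ → ℤ) (m t : ℕ) (hm : 0 < m) (ht : 0 < t)
    (IH : ∀ s, s ∣ t → s ≠ t → (s : ℤ) ∣ ∑ d ∈ s.divisors, h d) :
    ((t : ℤ) ∣ ∑ d ∈ t.divisors, h d * (((t/d) * m - 1).choose ((t/d) - 1) : ℤ)) ↔
      ((t : ℤ) ∣ ∑ d ∈ t.divisors, h d) := by
  have hS : ∑ d ∈ t.divisors, h d * (((t/d) * m - 1).choose ((t/d) - 1) : ℤ)
      = (hAF h * BAF m) t := by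
    rw [ArithmeticFunction.mul_apply, Nat.sum_divisorsAntidiagonal
      (fun a b => hAF h a * BAF m b)]
    apply Finset.sum_congr rfl
    intro d hd
    have h1 : d ≠ 0 := (Nat.pos_of_mem_divisors hd).ne'
    have h2 : t / d ≠ 0 :=
      (Nat.div_pos (Nat.le_of_dvd ht (Nat.dvd_of_mem_divisors hd))
        (Nat.pos_of_mem_divisors hd)).ne'
    simp [hAF, BAF, h1, h2]
  have hfact : hAF h * BAF m = (hAF h * (ζ : ArithmeticFunction ℤ))
      * ((μ : ArithmeticFunction ℤ) * BAF m) := by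
    have hZM : (ζ : ArithmeticFunction ℤ) * (μ : ArithmeticFunction ℤ) = 1 :=
      coe_zeta_mul_coe_moebius
    calc hAF h * BAF m = hAF h * 1 * BAF m := by rw [mul_one]
      _ = hAF h * ((ζ : ArithmeticFunction ℤ) * (μ : ArithmeticFunction ℤ)) * BAF m := by
          rw [hZM]
      _ = (hAF h * (ζ : ArithmeticFunction ℤ)) * ((μ : ArithmeticFunction ℤ) * BAF m) := by
          ring
  have hmem : ((t, 1) : ℕ × ℕ) ∈ t.divisorsAntidiagonal := by
    rw [Nat.mem_divisorsAntidiagonal]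
    exact ⟨mul_one t, ht.ne'⟩
  have hsplit : (hAF h * BAF m) t
      = (hAF h * (ζ : ArithmeticFunction ℤ)) t * ((μ : ArithmeticFunction ℤ) * BAF m) 1
        + ∑ x ∈ t.divisorsAntidiagonal.erase (t, 1),
            (hAF h * (ζ : ArithmeticFunction ℤ)) x.1 * ((μ : ArithmeticFunction ℤ) * BAF m) x.2 := by
    rw [hfact, ArithmeticFunction.mul_apply, ← Finset.add_sum_erase _ _ hmem]
  have hone : ((μ : ArithmeticFunction ℤ) * BAF m) 1 = 1 := by
    rw [ArithmeticFunction.mul_apply]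
    simp [BAF]
  have hrest : (t : ℤ) ∣ ∑ x ∈ t.divisorsAntidiagonal.erase (t, 1),
      (hAF h * (ζ : ArithmeticFunction ℤ)) x.1 * ((μ : ArithmeticFunction ℤ) * BAF m) x.2 := by
    apply Finset.dvd_sum
    intro x hx
    have hx' := Finset.mem_of_mem_erase hx
    obtain ⟨hxt, ht0⟩ := Nat.mem_divisorsAntidiagonal.mp hx'
    have hx1pos : 0 < x.1 := by
      rcases Nat.eq_zero_or_pos x.1 with hc | hc
      · rw [hc] at hxt; simp at hxt; omega
      · exact hc
    have hx2pos : 0 < x.2 := by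
      rcases Nat.eq_zero_or_pos x.2 with hc | hc
      · rw [hc] at hxt; simp at hxt; omega
      · exact hc
    have hx1ne : x.1 ≠ t := by
      intro hc
      apply Finset.ne_of_mem_erase hx
      have : x.2 = 1 := by
        rw [hc] at hxt
        nlinarith [hxt]
      ext
      · exact hc
      · exact this
    have hd1 : (x.1 : ℤ) ∣ (hAF h * (ζ : ArithmeticFunction ℤ)) x.1 := by
      rw [hAF_mul_zeta h x.1 hx1pos]
      exact IH x.1 ⟨x.2, hxt.symm⟩ hx1ne
    have hd2 : (x.2 : ℤ) ∣ ((μ : ArithmeticFunction ℤ) * BAF m) x.2 :=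
      moebius_mul_BAF_dvd m x.2 hm hx2pos
    have : ((x.1 * x.2 : ℕ) : ℤ) ∣ _ := mul_dvd_mul hd1 hd2
    rw [hxt] at this
    · exact_mod_cast this
  rw [hS, hsplit, hone, mul_one, hAF_mul_zeta h t ht]
  constructor
  · intro hd
    have := dvd_sub hd hrest
    simpa using this
  · intro hd
    exact dvd_add hd hrest

end Assemble

/-- For `h : ℕ → ℤ` and `n > 0`, the following are equivalent:
(i) for every `t ∣ n`, `t ∣ ∑_{d ∣ t} h d`;
(ii) for every `t ∣ n` there is `m > 0` with `t ∣ ∑_{d ∣ t} h d * C((t/d)m - 1, t/d - 1)`. -/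
theorem stmt7 (n : ℕ) (hn : 0 < n) (h : ℕ → ℤ) :
    (∀ t : ℕ, t ∣ n → (t : ℤ) ∣ ∑ d ∈ t.divisors, h d) ↔
    (∀ t : ℕ, t ∣ n → ∃ m : ℕ, 0 < m ∧
      (t : ℤ) ∣ ∑ d ∈ t.divisors, h d * ((t / d * m - 1).choose (t / d - 1) : ℤ)) := by
  constructor
  · intro H t htn
    refine ⟨1, one_pos, ?_⟩
    have heq : ∑ d ∈ t.divisors, h d * ((t / d * 1 - 1).choose (t / d - 1) : ℤ)
        = ∑ d ∈ t.divisors, h d := by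
      apply Finset.sum_congr rfl
      intro d hd
      rw [Nat.mul_one, Nat.choose_self, Nat.cast_one, mul_one]
    rw [heq]
    exact H t htn
  · intro H t
    induction t using Nat.strong_induction_on with
    | _ t IH =>
      intro htn
      have ht : 0 < t := Nat.pos_of_dvd_of_pos htn hn
      obtain ⟨m, hm, hdvd⟩ := H t htn
      exact (main_step h m t hm ht (fun s hst hne =>
        IH s (Nat.lt_of_le_of_ne (Nat.le_of_dvd ht hst) hne) (hst.trans htn))).mp hdvd
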